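/- Let (Y_j)_{j≥1} and (Y*_j)_{j≥1} be sequences of ℝ^ℓ-valued random vectors such that n^{-1}Σ_{j=1}^n Y_j → μ almost surely and n^{-1}Σ_{j=1}^n Y*_j → μ* almost surely, where μ, μ* ∈ ℝ^ℓ. Fix θ ∈ (0,1) and set v*_n = ⌊nθ⌋. For each n define W_j^{(n)} = Y_j for 1 ≤ j ≤ v*_n and W_j^{(n)} = Y*_j for v*_n < j ≤ n, and the CUSUM process S_v^{(n)} = n^{-1/2}(Σ_{j=1}^v W_j^{(n)} − (v/n)Σ_{j=1}^n W_j^{(n)}) for 1 ≤ v ≤ n, with S_0^{(n)} = 0. Define S*(t) = t(1−θ)(μ − μ*) for t ∈ [0,θ] and S*(t) = (1−t)θ(μ − μ*) for t ∈ (θ,1]. Then sup_{t∈[0,1]} ‖n^{-1/2} S_{⌊nt⌋}^{(n)} − S*(t)‖ → 0 in probability as n → ∞. -/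

import Mathlib

open Finset Filter

lemma aux_sum_split {E : Type*} [AddCommGroup E] (y z : ℕ → E) (v' k : ℕ) :
    ∑ j ∈ Finset.Icc 1 k, (if j ≤ v' then y j else z j)
      = (∑ j ∈ Finset.Icc 1 (min k v'), y j)
        + ((∑ j ∈ Finset.Icc 1 k, z j) - ∑ j ∈ Finset.Icc 1 (min k v'), z j) := by
  have h0 : ∀ m : ℕ, Finset.Icc 1 m = Finset.Ioc 0 m := fun m => Finset.Icc_add_one_left_eq_Ioc 0 m
  simp only [h0]
  have h1 := Finset.sum_Ioc_consecutive (fun j => if j ≤ v' then y j else z j)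
    (Nat.zero_le (min k v')) (min_le_left k v')
  have h2 := Finset.sum_Ioc_consecutive z (Nat.zero_le (min k v')) (min_le_left k v')
  have e1 : ∑ j ∈ Finset.Ioc 0 (min k v'), (if j ≤ v' then y j else z j)
      = ∑ j ∈ Finset.Ioc 0 (min k v'), y j := by
    refine Finset.sum_congr rfl fun j hj => ?_
    simp only [Finset.mem_Ioc] at hj
    rw [if_pos (le_trans hj.2 (min_le_right k v'))]
  have e2 : ∑ j ∈ Finset.Ioc (min k v') k, (if j ≤ v' then y j else z j)
      = ∑ j ∈ Finset.Ioc (min k v') k, z j := by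
    refine Finset.sum_congr rfl fun j hj => ?_
    simp only [Finset.mem_Ioc] at hj
    rw [if_neg (by omega)]
  rw [← h1, e1, e2, ← h2]
  abel

lemma aux_min_lip (a b c d : ℝ) : |min a b - min c d| ≤ |a - c| + |b - d| := by
  rcases le_total a b with h | h <;> rcases le_total c d with h' | h' <;>
    simp only [min_eq_left, min_eq_right, *] <;>
    rw [abs_le] <;> constructor <;>
    · have h1 := le_abs_self (a - c); have h2 := neg_abs_le (a - c)
      have h3 := le_abs_self (b - d); have h4 := neg_abs_le (b - d)
      linarith

lemma aux_prod_bound (a b c d M δ : ℝ) (hM : 0 ≤ M) (ha : |a| ≤ M) (hd : |d| ≤ M)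
    (h1 : |b - d| ≤ δ) (h2 : |a - c| ≤ δ) : |a * b - c * d| ≤ 2 * (M * δ) := by
  have h : a * b - c * d = a * (b - d) + d * (a - c) := by ring
  rw [h]
  calc |a * (b - d) + d * (a - c)| ≤ |a * (b - d)| + |d * (a - c)| := abs_add_le _ _
    _ = |a| * |b - d| + |d| * |a - c| := by rw [abs_mul, abs_mul]
    _ ≤ M * δ + M * δ := by
        apply add_le_add <;> apply mul_le_mul <;>
          first | assumption | exact abs_nonneg _
    _ = 2 * (M * δ) := by ring

lemma aux_c8_eq (rv rm rv' nn t s θ : ℝ) (hnn : nn ≠ 0) :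
    (rv - rm)/nn - rv*(nn - rv')/(nn*nn) - ((t - s) - t*(1-θ))
      = ((rv/nn - t) - (rm/nn - s)) - (rv/nn * (1 - rv'/nn) - t*(1-θ)) := by
  field_simp
  ring

set_option maxHeartbeats 1000000 in
lemma aux_core {E : Type*} [NormedAddCommGroup E] [NormedSpace ℝ E]
    (y z : ℕ → E) (μ μ' : E) (θ t : ℝ) (hθ0 : 0 ≤ θ) (hθ1 : θ ≤ 1)
    (ht0 : 0 ≤ t) (ht1 : t ≤ 1) (n : ℕ) (hn : 1 ≤ n) (D : ℝ)
    (hD : ∀ k ≤ n, ‖(∑ j ∈ Finset.Icc 1 k, y j) - (k:ℝ) • μ‖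
      + ‖(∑ j ∈ Finset.Icc 1 k, z j) - (k:ℝ) • μ'‖ ≤ D) :
    ‖(n:ℝ)⁻¹ • ((∑ j ∈ Finset.Icc 1 ⌊(n:ℝ)*t⌋₊, (if j ≤ ⌊(n:ℝ)*θ⌋₊ then y j else z j))
        - ((⌊(n:ℝ)*t⌋₊ : ℝ)/n) • ∑ j ∈ Finset.Icc 1 n, (if j ≤ ⌊(n:ℝ)*θ⌋₊ then y j else z j))
      - ((min t θ - t*θ) • μ + ((t - min t θ) - t*(1-θ)) • μ')‖
      ≤ (6*D + 5*(‖μ‖ + ‖μ'‖))/n := by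
  have hnpos : (0:ℝ) < n := by exact_mod_cast hn
  have hne : (n:ℝ) ≠ 0 := ne_of_gt hnpos
  set v : ℕ := ⌊(n:ℝ)*t⌋₊ with hv
  set v' : ℕ := ⌊(n:ℝ)*θ⌋₊ with hv'
  set m : ℕ := min v v' with hm
  set s : ℝ := min t θ with hs
  -- basic numeric facts
  have hvn : v ≤ n := by
    have : ⌊(n:ℝ)*t⌋₊ ≤ ⌊(n:ℝ)⌋₊ := Nat.floor_mono (by nlinarith)
    simpa using this
  have hv'n : v' ≤ n := by
    have : ⌊(n:ℝ)*θ⌋₊ ≤ ⌊(n:ℝ)⌋₊ := Nat.floor_mono (by nlinarith)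
    simpa using this
  have hmn : m ≤ n := le_trans (min_le_left _ _) hvn
  have hv1 : (v:ℝ) ≤ (n:ℝ)*t := Nat.floor_le (by positivity)
  have hv2 : (n:ℝ)*t ≤ (v:ℝ) + 1 := (Nat.lt_floor_add_one _).le
  have hv'1 : (v':ℝ) ≤ (n:ℝ)*θ := Nat.floor_le (by positivity)
  have hv'2 : (n:ℝ)*θ ≤ (v':ℝ) + 1 := (Nat.lt_floor_add_one _).le
  have habsv : |(v:ℝ)/n - t| ≤ 1/n := by
    have h : (v:ℝ)/n - t = ((v:ℝ) - (n:ℝ)*t)/n := by field_simp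
    rw [h, abs_div, abs_of_pos hnpos]
    gcongr
    rw [abs_le]; constructor <;> linarith
  have habsv' : |(v':ℝ)/n - θ| ≤ 1/n := by
    have h : (v':ℝ)/n - θ = ((v':ℝ) - (n:ℝ)*θ)/n := by field_simp
    rw [h, abs_div, abs_of_pos hnpos]
    gcongr
    rw [abs_le]; constructor <;> linarith
  have hvn' : |(v:ℝ)/n| ≤ 1 := by
    rw [abs_of_nonneg (by positivity), div_le_one hnpos]
    exact_mod_cast hvn
  -- rewrite the two big sums
  rw [aux_sum_split y z v' v, aux_sum_split y z v' n, min_eq_right hv'n]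
  -- error vectors
  set A1 : E := (∑ j ∈ Finset.Icc 1 m, y j) - (m:ℝ) • μ with hA1
  set A2 : E := (∑ j ∈ Finset.Icc 1 v, z j) - (v:ℝ) • μ' with hA2
  set A3 : E := (∑ j ∈ Finset.Icc 1 m, z j) - (m:ℝ) • μ' with hA3
  set A4 : E := (∑ j ∈ Finset.Icc 1 v', y j) - (v':ℝ) • μ with hA4
  set A5 : E := (∑ j ∈ Finset.Icc 1 n, z j) - (n:ℝ) • μ' with hA5
  set A6 : E := (∑ j ∈ Finset.Icc 1 v', z j) - (v':ℝ) • μ' with hA6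
  have e1 : (∑ j ∈ Finset.Icc 1 m, y j) = A1 + (m:ℝ) • μ := by rw [hA1]; abel
  have e2 : (∑ j ∈ Finset.Icc 1 v, z j) = A2 + (v:ℝ) • μ' := by rw [hA2]; abel
  have e3 : (∑ j ∈ Finset.Icc 1 m, z j) = A3 + (m:ℝ) • μ' := by rw [hA3]; abel
  have e4 : (∑ j ∈ Finset.Icc 1 v', y j) = A4 + (v':ℝ) • μ := by rw [hA4]; abel
  have e5 : (∑ j ∈ Finset.Icc 1 n, z j) = A5 + (n:ℝ) • μ' := by rw [hA5]; abel
  have e6 : (∑ j ∈ Finset.Icc 1 v', z j) = A6 + (v':ℝ) • μ' := by rw [hA6]; abel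
  rw [e1, e2, e3, e4, e5, e6]
  have key : (n:ℝ)⁻¹ • ((A1 + (m:ℝ) • μ + ((A2 + (v:ℝ) • μ') - (A3 + (m:ℝ) • μ')))
        - ((v:ℝ)/n) • (A4 + (v':ℝ) • μ + ((A5 + (n:ℝ) • μ') - (A6 + (v':ℝ) • μ'))))
      - ((s - t*θ) • μ + ((t - s) - t*(1-θ)) • μ')
      = (n:ℝ)⁻¹ • A1 + (n:ℝ)⁻¹ • A2 - (n:ℝ)⁻¹ • A3
        - ((v:ℝ)/((n:ℝ)*(n:ℝ))) • A4 - ((v:ℝ)/((n:ℝ)*(n:ℝ))) • A5 + ((v:ℝ)/((n:ℝ)*(n:ℝ))) • A6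
        + ((m:ℝ)/n - (v:ℝ)*(v':ℝ)/((n:ℝ)*(n:ℝ)) - (s - t*θ)) • μ
        + (((v:ℝ) - (m:ℝ))/n - (v:ℝ)*((n:ℝ) - (v':ℝ))/((n:ℝ)*(n:ℝ)) - ((t - s) - t*(1-θ))) • μ' := by
    match_scalars <;> field_simp <;> ring
  rw [key]
  -- norm bounds on the error vectors
  have hD0 : 0 ≤ D := le_trans (by positivity) (hD 0 (Nat.zero_le n))
  have hbY : ∀ k, k ≤ n → ‖(∑ j ∈ Finset.Icc 1 k, y j) - (k:ℝ) • μ‖ ≤ D := fun k hk =>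
    le_trans (le_add_of_nonneg_right (norm_nonneg _)) (hD k hk)
  have hbZ : ∀ k, k ≤ n → ‖(∑ j ∈ Finset.Icc 1 k, z j) - (k:ℝ) • μ'‖ ≤ D := fun k hk =>
    le_trans (le_add_of_nonneg_left (norm_nonneg _)) (hD k hk)
  have hA1n : ‖A1‖ ≤ D := hbY m hmn
  have hA2n : ‖A2‖ ≤ D := hbZ v hvn
  have hA3n : ‖A3‖ ≤ D := hbZ m hmn
  have hA4n : ‖A4‖ ≤ D := hbY v' hv'n
  have hA5n : ‖A5‖ ≤ D := hbZ n le_rfl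
  have hA6n : ‖A6‖ ≤ D := hbZ v' hv'n
  -- scalar coefficient bounds
  have hvnr : (v:ℝ) ≤ (n:ℝ) := by exact_mod_cast hvn
  have hco1 : |(n:ℝ)⁻¹| ≤ 1/n := by
    rw [abs_of_pos (by positivity), one_div]
  have hco2 : |(v:ℝ)/((n:ℝ)*(n:ℝ))| ≤ 1/n := by
    rw [abs_of_nonneg (by positivity), div_le_div_iff₀ (by positivity) hnpos]
    nlinarith
  have hms : |(m:ℝ)/n - s| ≤ 2/n := by
    have hcast : (m:ℝ) = min (v:ℝ) (v':ℝ) := by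
      simp [hm, Nat.cast_min]
    rw [hcast, hs, ← min_div_div_right hnpos.le]
    calc |min ((v:ℝ)/n) ((v':ℝ)/n) - min t θ| ≤ |(v:ℝ)/n - t| + |(v':ℝ)/n - θ| :=
          aux_min_lip _ _ _ _
      _ ≤ 1/n + 1/n := add_le_add habsv habsv'
      _ = 2/n := by ring
  have hθabs : |θ| ≤ 1 := by rw [abs_of_nonneg hθ0]; exact hθ1
  have hprod1 : |(v:ℝ)*(v':ℝ)/((n:ℝ)*(n:ℝ)) - t*θ| ≤ 2/n := by
    rw [← div_mul_div_comm]
    calc |(v:ℝ)/n * ((v':ℝ)/n) - t*θ| ≤ 2*(1*(1/n)) :=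
          aux_prod_bound _ _ _ _ 1 (1/(n:ℝ)) zero_le_one hvn' hθabs habsv' habsv
      _ = 2/n := by ring
  have hc7 : |(m:ℝ)/n - (v:ℝ)*(v':ℝ)/((n:ℝ)*(n:ℝ)) - (s - t*θ)| ≤ 4/n := by
    have hr : (m:ℝ)/n - (v:ℝ)*(v':ℝ)/((n:ℝ)*(n:ℝ)) - (s - t*θ)
        = ((m:ℝ)/n - s) - ((v:ℝ)*(v':ℝ)/((n:ℝ)*(n:ℝ)) - t*θ) := by ring
    rw [hr]
    calc |((m:ℝ)/n - s) - ((v:ℝ)*(v':ℝ)/((n:ℝ)*(n:ℝ)) - t*θ)|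
        ≤ |(m:ℝ)/n - s| + |(v:ℝ)*(v':ℝ)/((n:ℝ)*(n:ℝ)) - t*θ| := abs_sub _ _
      _ ≤ 2/n + 2/n := add_le_add hms hprod1
      _ = 4/n := by ring
  have hprod2 : |(v:ℝ)/n * (1 - (v':ℝ)/n) - t*(1-θ)| ≤ 2/n := by
    have h1θ : |1 - θ| ≤ 1 := by rw [abs_of_nonneg (by linarith)]; linarith
    have hb : |(1 - (v':ℝ)/n) - (1-θ)| ≤ 1/n := by
      have : (1 - (v':ℝ)/n) - (1-θ) = -((v':ℝ)/n - θ) := by ring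
      rw [this, abs_neg]; exact habsv'
    calc |(v:ℝ)/n * (1 - (v':ℝ)/n) - t*(1-θ)| ≤ 2*(1*(1/n)) :=
          aux_prod_bound _ _ _ _ 1 (1/(n:ℝ)) zero_le_one hvn' h1θ hb habsv
      _ = 2/n := by ring
  have hc8 : |((v:ℝ) - (m:ℝ))/n - (v:ℝ)*((n:ℝ) - (v':ℝ))/((n:ℝ)*(n:ℝ)) - ((t - s) - t*(1-θ))| ≤ 5/n := by
    have hr : ((v:ℝ) - (m:ℝ))/n - (v:ℝ)*((n:ℝ) - (v':ℝ))/((n:ℝ)*(n:ℝ)) - ((t - s) - t*(1-θ))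
        = (((v:ℝ)/n - t) - ((m:ℝ)/n - s)) - ((v:ℝ)/n * (1 - (v':ℝ)/n) - t*(1-θ)) :=
      aux_c8_eq _ _ _ _ _ _ _ hne
    rw [hr]
    calc |(((v:ℝ)/n - t) - ((m:ℝ)/n - s)) - ((v:ℝ)/n * (1 - (v':ℝ)/n) - t*(1-θ))|
        ≤ |((v:ℝ)/n - t) - ((m:ℝ)/n - s)| + |(v:ℝ)/n * (1 - (v':ℝ)/n) - t*(1-θ)| := abs_sub _ _
      _ ≤ (|(v:ℝ)/n - t| + |(m:ℝ)/n - s|) + 2/n := add_le_add (abs_sub _ _) hprod2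
      _ ≤ (1/n + 2/n) + 2/n := add_le_add_left (add_le_add habsv hms) _
      _ = 5/n := by ring
  -- combine
  have hT : ∀ (c : ℝ) (x : E) (cb xb : ℝ), |c| ≤ cb → ‖x‖ ≤ xb → ‖c • x‖ ≤ cb * xb := by
    intro c x cb xb hc hx
    rw [norm_smul, Real.norm_eq_abs]
    exact mul_le_mul hc hx (norm_nonneg x) (le_trans (abs_nonneg c) hc)
  have b1 := hT _ A1 _ _ hco1 hA1n
  have b2 := hT _ A2 _ _ hco1 hA2n
  have b3 := hT _ A3 _ _ hco1 hA3n
  have b4 := hT _ A4 _ _ hco2 hA4n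
  have b5 := hT _ A5 _ _ hco2 hA5n
  have b6 := hT _ A6 _ _ hco2 hA6n
  have b7 := hT _ μ _ _ hc7 (le_refl ‖μ‖)
  have b8 := hT _ μ' _ _ hc8 (le_refl ‖μ'‖)
  set T1 := (n:ℝ)⁻¹ • A1
  set T2 := (n:ℝ)⁻¹ • A2
  set T3 := (n:ℝ)⁻¹ • A3
  set T4 := ((v:ℝ)/((n:ℝ)*(n:ℝ))) • A4
  set T5 := ((v:ℝ)/((n:ℝ)*(n:ℝ))) • A5
  set T6 := ((v:ℝ)/((n:ℝ)*(n:ℝ))) • A6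
  set T7 := ((m:ℝ)/n - (v:ℝ)*(v':ℝ)/((n:ℝ)*(n:ℝ)) - (s - t*θ)) • μ
  set T8 := (((v:ℝ) - (m:ℝ))/n - (v:ℝ)*((n:ℝ) - (v':ℝ))/((n:ℝ)*(n:ℝ)) - ((t - s) - t*(1-θ))) • μ'
  have sum_bound : ‖T1 + T2 - T3 - T4 - T5 + T6 + T7 + T8‖
      ≤ ‖T1‖ + ‖T2‖ + ‖T3‖ + ‖T4‖ + ‖T5‖ + ‖T6‖ + ‖T7‖ + ‖T8‖ := by
    calc ‖T1 + T2 - T3 - T4 - T5 + T6 + T7 + T8‖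
        ≤ ‖T1 + T2 - T3 - T4 - T5 + T6 + T7‖ + ‖T8‖ := norm_add_le _ _
      _ ≤ ‖T1 + T2 - T3 - T4 - T5 + T6‖ + ‖T7‖ + ‖T8‖ :=
          add_le_add_left (norm_add_le _ _) _
      _ ≤ ‖T1 + T2 - T3 - T4 - T5‖ + ‖T6‖ + ‖T7‖ + ‖T8‖ :=
          add_le_add_left (add_le_add_left (norm_add_le _ _) _) _
      _ ≤ ‖T1 + T2 - T3 - T4‖ + ‖T5‖ + ‖T6‖ + ‖T7‖ + ‖T8‖ :=
          add_le_add_left (add_le_add_left (add_le_add_left (norm_sub_le _ _) _) _) _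
      _ ≤ ‖T1 + T2 - T3‖ + ‖T4‖ + ‖T5‖ + ‖T6‖ + ‖T7‖ + ‖T8‖ :=
          add_le_add_left (add_le_add_left (add_le_add_left (add_le_add_left (norm_sub_le _ _) _) _) _) _
      _ ≤ ‖T1 + T2‖ + ‖T3‖ + ‖T4‖ + ‖T5‖ + ‖T6‖ + ‖T7‖ + ‖T8‖ :=
          add_le_add_left (add_le_add_left (add_le_add_left (add_le_add_left (add_le_add_left (norm_sub_le _ _) _) _) _) _) _
      _ ≤ ‖T1‖ + ‖T2‖ + ‖T3‖ + ‖T4‖ + ‖T5‖ + ‖T6‖ + ‖T7‖ + ‖T8‖ :=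
          add_le_add_left (add_le_add_left (add_le_add_left (add_le_add_left (add_le_add_left (add_le_add_left (norm_add_le _ _) _) _) _) _) _) _
  have hrhs : (6*D + 5*(‖μ‖ + ‖μ'‖))/n
      = 1/(n:ℝ)*D + 1/(n:ℝ)*D + 1/(n:ℝ)*D + 1/(n:ℝ)*D + 1/(n:ℝ)*D + 1/(n:ℝ)*D
        + 4/(n:ℝ)*‖μ‖ + 5/(n:ℝ)*‖μ'‖ + 1/(n:ℝ)*‖μ‖ := by
    field_simp
    ring
  have hnneg : 0 ≤ 1/(n:ℝ)*‖μ‖ := by positivity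
  linarith [sum_bound]


open Finset Filter

lemma aux_max_div (a : ℕ → ℝ) (ha : ∀ k, 0 ≤ a k)
    (h : Tendsto (fun k => a k / k) atTop (nhds 0)) :
    Tendsto (fun n : ℕ => ((Finset.range (n+1)).sup' (by simp) a) / n) atTop (nhds 0) := by
  rw [Metric.tendsto_atTop] at h ⊢
  intro ε hε
  obtain ⟨K, hK⟩ := h (ε/2) (by linarith)
  set B := (Finset.range (K+1)).sup' (by simp) a with hB
  obtain ⟨N₀, hN₀⟩ := exists_nat_gt (2 * B / ε)
  refine ⟨max (max K N₀) 1, fun n hn => ?_⟩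
  have hn1 : 1 ≤ n := le_trans (le_max_right _ _) hn
  have hnK : K ≤ n := le_trans (le_trans (le_max_left _ _) (le_max_left _ _)) hn
  have hnN : N₀ ≤ n := le_trans (le_trans (le_max_right _ _) (le_max_left _ _)) hn
  have hnpos : (0:ℝ) < n := by exact_mod_cast hn1
  have hsup : (Finset.range (n+1)).sup' (by simp) a < ε * n := by
    rw [Finset.sup'_lt_iff]
    intro k hk
    simp only [Finset.mem_range] at hk
    rcases le_or_gt k K with hkK | hkK
    · have hB' : a k ≤ B := Finset.le_sup' a (by simp [Finset.mem_range]; omega)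
      rcases le_or_gt B 0 with h0 | h0
      · calc a k ≤ 0 := le_trans hB' h0
          _ < ε * n := by positivity
      · have hBN : B < ε / 2 * N₀ := by
          rw [div_lt_iff₀ hε] at hN₀; nlinarith
        have hN₀n : (N₀ : ℝ) ≤ n := by exact_mod_cast hnN
        nlinarith [ha k]
    · have hkn : (k:ℝ) ≤ n := by exact_mod_cast Nat.lt_succ_iff.1 hk
      have hkpos : (0:ℝ) < k := by exact_mod_cast lt_of_le_of_lt (Nat.zero_le K) hkK
      have := hK k (le_of_lt hkK)
      rw [Real.dist_eq, sub_zero, abs_of_nonneg (div_nonneg (ha k) hkpos.le)] at this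
      rw [div_lt_iff₀ hkpos] at this
      nlinarith
  rw [Real.dist_eq, sub_zero]
  have hge : 0 ≤ (Finset.range (n+1)).sup' (by simp : (Finset.range (n+1)).Nonempty) a :=
    le_trans (ha 0) (Finset.le_sup' a (by simp))
  rw [abs_of_nonneg (by positivity)]
  rw [div_lt_iff₀ hnpos]
  exact hsup

open MeasureTheory ProbabilityTheory Filter
open scoped ProbabilityTheory

theorem stmt_11 {Ω : Type*} [MeasureSpace Ω] [IsProbabilityMeasure (ℙ : Measure Ω)]
    {l : ℕ} (hl : 1 ≤ l)
    (Y Ystar : ℕ → Ω → EuclideanSpace ℝ (Fin l))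
    (hYmeas : ∀ j, Measurable (Y j)) (hYstarmeas : ∀ j, Measurable (Ystar j))
    (μ μstar : EuclideanSpace ℝ (Fin l))
    (hY : ∀ᵐ ω ∂ℙ, Tendsto (fun n : ℕ => (n : ℝ)⁻¹ • ∑ j ∈ Finset.Icc 1 n, Y j ω)
      atTop (nhds μ))
    (hYstar : ∀ᵐ ω ∂ℙ, Tendsto (fun n : ℕ => (n : ℝ)⁻¹ • ∑ j ∈ Finset.Icc 1 n, Ystar j ω)
      atTop (nhds μstar))
    (θ : ℝ) (hθ : θ ∈ Set.Ioo (0 : ℝ) 1)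
    (W : ℕ → ℕ → Ω → EuclideanSpace ℝ (Fin l))
    (hW : ∀ n j ω, W n j ω = if j ≤ ⌊(n : ℝ) * θ⌋₊ then Y j ω else Ystar j ω)
    (S : ℕ → ℕ → Ω → EuclideanSpace ℝ (Fin l))
    (hS : ∀ n v ω, S n v ω = (Real.sqrt n)⁻¹ •
      (∑ j ∈ Finset.Icc 1 v, W n j ω - ((v : ℝ) / n) • ∑ j ∈ Finset.Icc 1 n, W n j ω))
    (Sstar : ℝ → EuclideanSpace ℝ (Fin l))
    (hSstar : ∀ t, Sstar t =
      if t ≤ θ then (t * (1 - θ)) • (μ - μstar) else ((1 - t) * θ) • (μ - μstar)) :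
    ∀ ε > 0, Tendsto (fun n : ℕ =>
      ℙ {ω | ε < ⨆ t ∈ Set.Icc (0 : ℝ) 1,
        ‖(Real.sqrt n)⁻¹ • S n ⌊(n : ℝ) * t⌋₊ ω - Sstar t‖})
      atTop (nhds 0) := by
  obtain ⟨hθ0, hθ1⟩ := hθ
  intro ε hε
  classical
  set g : ℕ → Ω → ℝ := fun n ω =>
    (6 * ((Finset.range (n+1)).sup' (by simp) fun k =>
        ‖(∑ j ∈ Finset.Icc 1 k, Y j ω) - (k:ℝ) • μ‖
          + ‖(∑ j ∈ Finset.Icc 1 k, Ystar j ω) - (k:ℝ) • μstar‖)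
      + 5*(‖μ‖ + ‖μstar‖)) / n with hg
  -- measurability of g n
  have hmeas : ∀ n, Measurable (g n) := by
    intro n
    apply Measurable.div_const
    apply Measurable.add_const
    apply Measurable.const_mul
    have h1 : (fun ω : Ω => (Finset.range (n+1)).sup' (by simp) fun k =>
          ‖(∑ j ∈ Finset.Icc 1 k, Y j ω) - (k:ℝ) • μ‖
            + ‖(∑ j ∈ Finset.Icc 1 k, Ystar j ω) - (k:ℝ) • μstar‖)
        = (Finset.range (n+1)).sup' (by simp) (fun k (ω : Ω) =>
          ‖(∑ j ∈ Finset.Icc 1 k, Y j ω) - (k:ℝ) • μ‖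
            + ‖(∑ j ∈ Finset.Icc 1 k, Ystar j ω) - (k:ℝ) • μstar‖) := by
      funext ω
      rw [Finset.sup'_apply]
    rw [h1]
    exact Finset.measurable_sup' _ fun k _ =>
      ((Finset.measurable_sum _ fun j _ => hYmeas j).sub measurable_const).norm.add
        ((Finset.measurable_sum _ fun j _ => hYstarmeas j).sub measurable_const).norm
  -- a.s. convergence of g to 0
  have hae : ∀ᵐ ω ∂ℙ, Tendsto (fun n => g n ω) atTop (nhds 0) := by
    filter_upwards [hY, hYstar] with ω h1 h2
    have e1 : Tendsto (fun k : ℕ =>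
        ‖(∑ j ∈ Finset.Icc 1 k, Y j ω) - (k:ℝ) • μ‖ / k) atTop (nhds 0) := by
      have := (tendsto_iff_norm_sub_tendsto_zero.mp h1)
      apply this.congr'
      filter_upwards [eventually_ge_atTop 1] with k hk
      have hkne : (k:ℝ) ≠ 0 := Nat.cast_ne_zero.2 (by omega)
      have heq : (k:ℝ)⁻¹ • ((∑ j ∈ Finset.Icc 1 k, Y j ω) - (k:ℝ) • μ)
          = (k:ℝ)⁻¹ • ∑ j ∈ Finset.Icc 1 k, Y j ω - μ := by
        rw [smul_sub, smul_smul, inv_mul_cancel₀ hkne, one_smul]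
      rw [← heq, norm_smul, Real.norm_eq_abs, abs_of_nonneg (by positivity),
        ← div_eq_inv_mul]
    have e2 : Tendsto (fun k : ℕ =>
        ‖(∑ j ∈ Finset.Icc 1 k, Ystar j ω) - (k:ℝ) • μstar‖ / k) atTop (nhds 0) := by
      have := (tendsto_iff_norm_sub_tendsto_zero.mp h2)
      apply this.congr'
      filter_upwards [eventually_ge_atTop 1] with k hk
      have hkne : (k:ℝ) ≠ 0 := Nat.cast_ne_zero.2 (by omega)
      have heq : (k:ℝ)⁻¹ • ((∑ j ∈ Finset.Icc 1 k, Ystar j ω) - (k:ℝ) • μstar)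
          = (k:ℝ)⁻¹ • ∑ j ∈ Finset.Icc 1 k, Ystar j ω - μstar := by
        rw [smul_sub, smul_smul, inv_mul_cancel₀ hkne, one_smul]
      rw [← heq, norm_smul, Real.norm_eq_abs, abs_of_nonneg (by positivity),
        ← div_eq_inv_mul]
    have hsum : Tendsto (fun k : ℕ =>
        (‖(∑ j ∈ Finset.Icc 1 k, Y j ω) - (k:ℝ) • μ‖
          + ‖(∑ j ∈ Finset.Icc 1 k, Ystar j ω) - (k:ℝ) • μstar‖) / k) atTop (nhds 0) := by
      have := e1.add e2
      rw [add_zero] at this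
      apply this.congr
      intro k
      rw [← add_div]
    have hmax := aux_max_div _ (fun k => by positivity) hsum
    have hconst : Tendsto (fun n : ℕ => (5*(‖μ‖ + ‖μstar‖)) / n) atTop (nhds 0) :=
      tendsto_const_div_atTop_nhds_zero_nat _
    have := (hmax.const_mul 6).add hconst
    rw [mul_zero, add_zero] at this
    apply this.congr
    intro n
    simp only [hg]
    ring
  -- pointwise domination of the sup by g n
  have hsup : ∀ n : ℕ, 1 ≤ n → ∀ ω : Ω,
      (⨆ t ∈ Set.Icc (0:ℝ) 1, ‖(Real.sqrt n)⁻¹ • S n ⌊(n:ℝ)*t⌋₊ ω - Sstar t‖) ≤ g n ω := by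
    intro n hn ω
    have hnpos : (0:ℝ) < n := by exact_mod_cast hn
    set D : ℝ := (Finset.range (n+1)).sup' (by simp) fun k =>
        ‖(∑ j ∈ Finset.Icc 1 k, Y j ω) - (k:ℝ) • μ‖
          + ‖(∑ j ∈ Finset.Icc 1 k, Ystar j ω) - (k:ℝ) • μstar‖ with hD
    have hDb : ∀ k, k ≤ n → ‖(∑ j ∈ Finset.Icc 1 k, Y j ω) - (k:ℝ) • μ‖
        + ‖(∑ j ∈ Finset.Icc 1 k, Ystar j ω) - (k:ℝ) • μstar‖ ≤ D := by
      intro k hk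
      rw [hD]
      exact Finset.le_sup' (fun k => ‖(∑ j ∈ Finset.Icc 1 k, Y j ω) - (k:ℝ) • μ‖
        + ‖(∑ j ∈ Finset.Icc 1 k, Ystar j ω) - (k:ℝ) • μstar‖)
        (Finset.mem_range.2 (Nat.lt_succ_of_le hk))
    have hD0 : 0 ≤ D := le_trans (by positivity) (hDb 0 (Nat.zero_le n))
    have hgeq : g n ω = (6*D + 5*(‖μ‖ + ‖μstar‖))/n := by simp only [hg, hD]
    have hg0 : 0 ≤ g n ω := by
      rw [hgeq]
      apply div_nonneg _ hnpos.le
      positivity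
    refine Real.iSup_le (fun t => Real.iSup_le (fun ht => ?_) hg0) hg0
    -- rewrite the expression into the aux_core form
    have hWs : ∀ k : ℕ, ∑ j ∈ Finset.Icc 1 k, W n j ω
        = ∑ j ∈ Finset.Icc 1 k, (if j ≤ ⌊(n:ℝ)*θ⌋₊ then Y j ω else Ystar j ω) :=
      fun k => Finset.sum_congr rfl fun j _ => hW n j ω
    have hSs : Sstar t = (min t θ - t*θ) • μ + ((t - min t θ) - t*(1-θ)) • μstar := by
      rw [hSstar t]
      rcases le_or_gt t θ with h | h
      · rw [if_pos h, min_eq_left h]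
        module
      · rw [if_neg (not_le.2 h), min_eq_right h.le]
        module
    have heq : (Real.sqrt n)⁻¹ • S n ⌊(n:ℝ)*t⌋₊ ω - Sstar t
        = (n:ℝ)⁻¹ • ((∑ j ∈ Finset.Icc 1 ⌊(n:ℝ)*t⌋₊, (if j ≤ ⌊(n:ℝ)*θ⌋₊ then Y j ω else Ystar j ω))
            - ((⌊(n:ℝ)*t⌋₊ : ℝ)/n) • ∑ j ∈ Finset.Icc 1 n, (if j ≤ ⌊(n:ℝ)*θ⌋₊ then Y j ω else Ystar j ω))
          - ((min t θ - t*θ) • μ + ((t - min t θ) - t*(1-θ)) • μstar) := by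
      rw [hS n ⌊(n:ℝ)*t⌋₊ ω, hSs, smul_smul, ← mul_inv, Real.mul_self_sqrt (Nat.cast_nonneg n),
        hWs, hWs]
    rw [heq, hgeq]
    exact aux_core (fun j => Y j ω) (fun j => Ystar j ω) μ μstar θ t hθ0.le hθ1.le
      ht.1 ht.2 n hn D hDb
  -- conclude via convergence in measure
  have hinmeas : TendstoInMeasure ℙ (fun n ω => g n ω) atTop 0 :=
    tendstoInMeasure_of_tendsto_ae (fun n => (hmeas n).aestronglyMeasurable) hae
  have h2 := hinmeas (ENNReal.ofReal ε) (ENNReal.ofReal_pos.2 hε)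
  apply tendsto_of_tendsto_of_tendsto_of_le_of_le' tendsto_const_nhds h2
  · exact Eventually.of_forall fun n => zero_le
  · filter_upwards [eventually_ge_atTop 1] with n hn
    apply measure_mono
    intro ω hω
    simp only [Set.mem_setOf_eq] at hω ⊢
    have h3 : ε < g n ω := lt_of_lt_of_le hω (hsup n hn ω)
    have : edist (g n ω) ((0 : Ω → ℝ) ω) = ENNReal.ofReal |g n ω| := by
      simp [edist_dist, Real.dist_eq]
    rw [this]
    exact ENNReal.ofReal_le_ofReal (le_trans h3.le (le_abs_self _))
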